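/- If there exist positive integers m and r with T_n·T_m - 1 = r^2, then both n and n+1 can be written as a sum of two squares. -/

import Mathlib

def T (n : ℕ) : ℕ := n * (n + 1) / 2

theorem stmt_10 (n : ℕ) (hn : 0 < n)
    (h : ∃ m r : ℕ, 0 < m ∧ 0 < r ∧ (T n : ℤ) * T m - 1 = (r : ℤ) ^ 2) :
    (∃ a b : ℕ, n = a ^ 2 + b ^ 2) ∧ (∃ a b : ℕ, n + 1 = a ^ 2 + b ^ 2) := by
  obtain ⟨m, r, hm, hr, heq⟩ := h
  -- T n * T m = r^2 + 1 in ℕ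
  have hnat : T n * T m = r ^ 2 + 1 := by
    have : (T n * T m : ℤ) = (r : ℤ) ^ 2 + 1 := by push_cast; linarith
    exact_mod_cast this
  -- -1 is a square mod r^2+1
  have hsq : IsSquare (-1 : ZMod (r ^ 2 + 1)) :=
    ZMod.isSquare_neg_one_of_eq_sq_add_sq_of_coprime
      (by ring_nf : r ^ 2 + 1 = r ^ 2 + 1 ^ 2) (Nat.coprime_one_right r)
  -- 2 * T n = n * (n+1)
  have h2T : 2 * T n = n * (n + 1) := by
    unfold T
    exact Nat.mul_div_cancel' (even_iff_two_dvd.mp (Nat.even_mul_succ_self n))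
  have hdvd : ∀ d : ℕ, d ∣ n * (n + 1) → ∃ a b : ℕ, d = a ^ 2 + b ^ 2 := by
    intro d hd
    rw [Nat.eq_sq_add_sq_iff]
    intro q hq hq3
    replace hq : q.Prime := Nat.prime_of_mem_primeFactors hq
    have hq2 : q ≠ 2 := by rintro rfl; norm_num at hq3
    suffices hqd : ¬ q ∣ d by
      rw [padicValNat.eq_zero_of_not_dvd hqd]; exact Even.zero
    intro hqd
    have hq2N : q ∣ 2 * (r ^ 2 + 1) := by
      rw [← hnat, ← mul_assoc, h2T]
      exact (hqd.trans hd).mul_right _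
    have hqN : q ∣ r ^ 2 + 1 :=
      (Nat.Coprime.dvd_of_dvd_mul_left (Nat.coprime_primes hq Nat.prime_two |>.mpr hq2
        |>.coprime_dvd_left dvd_rfl) hq2N)
    exact Nat.mod_four_ne_three_of_mem_primeFactors_of_isSquare_neg_one
      (Nat.mem_primeFactors.mpr ⟨hq, hqN, by positivity⟩) hsq hq3
  exact ⟨hdvd n (Dvd.intro _ rfl), hdvd (n + 1) (Dvd.intro_left _ rfl)⟩
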